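/- Let p be a prime, s a positive integer, q = p^s, R = Z_q[u]/(u^2), and r a positive integer. Let g ∈ F_p[X] be a monic irreducible polynomial dividing X^{p^r−1} − 1 in F_p[X]. Then there exists a unique monic polynomial f ∈ R[X] such that the coefficientwise reduction of f modulo (p,u) equals g and f divides X^{p^r−1} − 1 in R[X]; moreover any such f is basic irreducible. -/

import Mathlib

open Polynomial

section Helpers

variable {S : Type*} [CommRing S]

lemma coeffs_mem_iff (M : Ideal S) (f : S[X]) :
    (∀ n, f.coeff n ∈ M) ↔ f.map (Ideal.Quotient.mk M) = 0 := by
  constructor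
  · intro h; ext n; simp [Ideal.Quotient.eq_zero_iff_mem, h n]
  · intro h n
    have := congrArg (fun q : (S ⧸ M)[X] => q.coeff n) h
    simpa [Ideal.Quotient.eq_zero_iff_mem] using this

lemma coeffs_ker_iff {T : Type*} [CommRing T] (π : S →+* T) (f : S[X]) :
    (∀ n, f.coeff n ∈ RingHom.ker π) ↔ f.map π = 0 := by
  constructor
  · intro h; ext n; simpa using h n
  · intro h n
    have := congrArg (fun q : T[X] => q.coeff n) h
    simpa [RingHom.mem_ker] using this

lemma coeffs_mem_mul {J K : Ideal S} {a b : S[X]}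
    (ha : ∀ n, a.coeff n ∈ J) (hb : ∀ n, b.coeff n ∈ K) : ∀ n, (a * b).coeff n ∈ J * K := by
  intro n
  rw [Polynomial.coeff_mul]
  exact Ideal.sum_mem _ fun c _ => Ideal.mul_mem_mul (ha c.1) (hb c.2)

lemma coeffs_mem_mul_left {M : Ideal S} {a b : S[X]}
    (hb : ∀ n, b.coeff n ∈ M) : ∀ n, (a * b).coeff n ∈ M := by
  intro n
  rw [Polynomial.coeff_mul]
  exact Ideal.sum_mem _ fun c _ => M.mul_mem_left _ (hb c.2)

lemma coeffs_mem_mul_right {M : Ideal S} {a b : S[X]}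
    (ha : ∀ n, a.coeff n ∈ M) : ∀ n, (a * b).coeff n ∈ M := by
  rw [mul_comm]
  exact coeffs_mem_mul_left ha

lemma coeffs_mem_modByMonic {M : Ideal S} {a q : S[X]} (hq : q.Monic)
    (ha : ∀ n, a.coeff n ∈ M) : ∀ n, (a %ₘ q).coeff n ∈ M := by
  rw [coeffs_mem_iff] at ha ⊢
  rw [Polynomial.map_modByMonic _ hq, ha, Polynomial.zero_modByMonic]

lemma coeffs_mem_divByMonic {M : Ideal S} {a q : S[X]} (hq : q.Monic)
    (ha : ∀ n, a.coeff n ∈ M) : ∀ n, (a /ₘ q).coeff n ∈ M := by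
  rw [coeffs_mem_iff] at ha ⊢
  rw [Polynomial.map_divByMonic _ hq, ha, Polynomial.zero_divByMonic]

/-- Hensel's lemma for factorizations over a commutative ring modulo a nilpotent ideal. -/
lemma hensel_main [Nontrivial S] {I : Ideal S} {F G₀ H₀ A B : S[X]}
    (hcop : ∀ n, (1 - (A * G₀ + B * H₀)).coeff n ∈ I) (N : ℕ) (hN : I ^ N = ⊥) :
    ∀ (k m : ℕ), 1 ≤ m → N ≤ m + k →
      ∀ G H : S[X], G.Monic → (∀ n, (G - G₀).coeff n ∈ I) → (∀ n, (H - H₀).coeff n ∈ I) →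
      (∀ n, (F - G * H).coeff n ∈ I ^ m) →
      ∃ G' H', G'.Monic ∧ (∀ n, (G' - G₀).coeff n ∈ I) ∧ F = G' * H' := by
  intro k
  induction k with
  | zero =>
    intro m hm hNm G H hG hGI hHI hFGH
    refine ⟨G, H, hG, hGI, ?_⟩
    have hle : I ^ m ≤ (⊥ : Ideal S) := hN ▸ Ideal.pow_le_pow_right (by omega)
    have : F - G * H = 0 := by
      ext n
      simpa using hle (hFGH n)
    linear_combination this
  | succ k ih =>
    intro m hm hNm G H hG hGI hHI hFGH
    obtain ⟨Q, rr, hdiv, hrrI, hQI, hdeg⟩ :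
        ∃ Q rr : S[X], rr + G * Q = B * (F - G * H) ∧ (∀ n, rr.coeff n ∈ I ^ m) ∧
          (∀ n, Q.coeff n ∈ I ^ m) ∧ rr.degree < G.degree := by
      have hBe : ∀ n, (B * (F - G * H)).coeff n ∈ I ^ m := coeffs_mem_mul_left hFGH
      exact ⟨(B * (F - G * H)) /ₘ G, (B * (F - G * H)) %ₘ G,
        Polynomial.modByMonic_add_div _ G, coeffs_mem_modByMonic hG hBe,
        coeffs_mem_divByMonic hG hBe, Polynomial.degree_modByMonic_lt _ hG⟩
    have hpow_le : I ^ m ≤ I := Ideal.pow_le_self (by omega)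
    have hG' : (G + rr).Monic := hG.add_of_left hdeg
    have key : F - (G + rr) * (H + A * (F - G * H) + Q * H) =
        (F - G * H) * (1 - (A * G + B * H)) - rr * (A * (F - G * H) + Q * H) := by
      linear_combination (-H) * hdiv
    have h1 : ∀ n, (1 - (A * G + B * H)).coeff n ∈ I := by
      intro n
      have hre : (1 - (A * G + B * H)) =
          (1 - (A * G₀ + B * H₀)) - A * (G - G₀) - B * (H - H₀) := by ring
      rw [hre, Polynomial.coeff_sub, Polynomial.coeff_sub]
      exact sub_mem (sub_mem (hcop n) (coeffs_mem_mul_left hGI n)) (coeffs_mem_mul_left hHI n)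
    have h2 : ∀ n, (A * (F - G * H) + Q * H).coeff n ∈ I := by
      intro n
      rw [Polynomial.coeff_add]
      exact add_mem (hpow_le (coeffs_mem_mul_left hFGH n))
        (hpow_le (coeffs_mem_mul_right hQI n))
    have hnew : ∀ n, (F - (G + rr) * (H + A * (F - G * H) + Q * H)).coeff n ∈ I ^ (m + 1) := by
      intro n
      rw [key, Polynomial.coeff_sub, pow_succ]
      exact sub_mem (coeffs_mem_mul hFGH h1 n) (coeffs_mem_mul hrrI h2 n)
    exact ih (m + 1) (by omega) (by omega) (G + rr) (H + A * (F - G * H) + Q * H) hG'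
      (fun n => by
        have hre : G + rr - G₀ = (G - G₀) + rr := by ring
        rw [hre, Polynomial.coeff_add]
        exact add_mem (hGI n) (hpow_le (hrrI n)))
      (fun n => by
        have hre : H + A * (F - G * H) + Q * H - H₀ = (H - H₀) + (A * (F - G * H) + Q * H) := by
          ring
        rw [hre, Polynomial.coeff_add]
        exact add_mem (hHI n) (h2 n))
      hnew

end Helpers

/-- The reduction map `R = Z_q[u]/(u^2) → F_p` sending `a + b·u` to `a mod p`. -/
noncomputable def dualRed (p s : ℕ) (hs : 0 < s) :
    DualNumber (ZMod (p ^ s)) →+* ZMod p :=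
  (ZMod.castHom (dvd_pow_self p hs.ne') (ZMod p)).comp
    (TrivSqZeroExt.fstHom (ZMod (p ^ s)) (ZMod (p ^ s)) (ZMod (p ^ s))).toRingHom

theorem hensel_lift_exists_unique (p s r : ℕ) [Fact p.Prime] (hs : 0 < s) (hr : 0 < r)
    (g : Polynomial (ZMod p)) (hgm : g.Monic) (hgi : Irreducible g)
    (hgd : g ∣ X ^ (p ^ r - 1) - 1) :
    (∃! f : Polynomial (DualNumber (ZMod (p ^ s))),
      f.Monic ∧ f.map (dualRed p s hs) = g ∧ f ∣ X ^ (p ^ r - 1) - 1) ∧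
    (∀ f : Polynomial (DualNumber (ZMod (p ^ s))),
      f.Monic ∧ f.map (dualRed p s hs) = g ∧ f ∣ X ^ (p ^ r - 1) - 1 →
        f.Monic ∧ Irreducible (f.map (dualRed p s hs))) := by
  classical
  have hp2 : 1 < p := (Fact.out (p := p.Prime)).one_lt
  haveI : Fact (1 < p ^ s) := ⟨Nat.one_lt_pow hs.ne' hp2⟩
  set π := dualRed p s hs with hπdef
  set N := p ^ r - 1 with hNdef
  have hπs : Function.Surjective π := ZMod.ringHom_surjective π
  have hmaps := Polynomial.map_surjective π hπs
  -- `p ^ s = 0` and `ε ^ 2 = 0` in the dual numbers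
  have hps0 : ((p : DualNumber (ZMod (p ^ s)))) ^ s = 0 := by
    have h1 : ((p ^ s : ℕ) : DualNumber (ZMod (p ^ s))) = 0 := by
      have := map_natCast (TrivSqZeroExt.inlHom (ZMod (p ^ s)) (ZMod (p ^ s))) (p ^ s)
      rw [← this, ZMod.natCast_self, map_zero]
    rw [Nat.cast_pow] at h1
    exact h1
  have heps0 : (DualNumber.eps : DualNumber (ZMod (p ^ s))) ^ 2 = 0 := by
    rw [sq, DualNumber.eps_mul_eps]
  -- the kernel of π is contained in the span of p and ε
  have hker_le : RingHom.ker π ≤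
      Ideal.span {((p : DualNumber (ZMod (p ^ s)))), DualNumber.eps} := by
    intro x hx
    rw [RingHom.mem_ker] at hx
    have hfst : ((x.fst).val : ZMod p) = 0 := by
      have h0 : (ZMod.castHom (dvd_pow_self p hs.ne') (ZMod p)) x.fst = 0 := hx
      rwa [ZMod.castHom_apply, ← ZMod.natCast_val] at h0
    obtain ⟨t, ht⟩ := (ZMod.natCast_eq_zero_iff _ _).mp hfst
    rw [Ideal.mem_span_pair]
    refine ⟨TrivSqZeroExt.inl ((t : ZMod (p ^ s))), TrivSqZeroExt.inl x.snd, ?_⟩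
    have hx1 : x.fst = (p : ZMod (p ^ s)) * (t : ZMod (p ^ s)) := by
      have hv : ((x.fst).val : ZMod (p ^ s)) = x.fst := by
        rw [ZMod.natCast_val, ZMod.cast_id]
      rw [← hv, ht]
      push_cast
      ring
    have hpcast : (p : DualNumber (ZMod (p ^ s))) = TrivSqZeroExt.inl ((p : ZMod (p ^ s))) := by
      exact (map_natCast (TrivSqZeroExt.inlHom (ZMod (p ^ s)) (ZMod (p ^ s))) p).symm
    have hepsdef : (DualNumber.eps : DualNumber (ZMod (p ^ s))) = TrivSqZeroExt.inr 1 := rfl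
    rw [hpcast, hepsdef, TrivSqZeroExt.inl_mul_inl, TrivSqZeroExt.inl_mul_inr,
      ← TrivSqZeroExt.inl_fst_add_inr_snd_eq x]
    rw [hx1]
    congr 1
    · congr 1; ring
    · congr 1; simp
  -- the kernel of π is nilpotent
  have hkerpow : (RingHom.ker π) ^ (s + 2) = ⊥ := by
    refine le_bot_iff.mp ?_
    refine le_trans (Ideal.pow_right_mono hker_le (s + 2)) ?_
    have hsplit : Ideal.span {((p : DualNumber (ZMod (p ^ s)))), DualNumber.eps} =
        Ideal.span {((p : DualNumber (ZMod (p ^ s))))} ⊔ Ideal.span {DualNumber.eps} := by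
      rw [Ideal.span_insert]
    rw [hsplit]
    refine le_trans Ideal.sup_pow_add_le_pow_sup_pow ?_
    rw [Ideal.span_singleton_pow, Ideal.span_singleton_pow, hps0, heps0]
    simp
  -- the reduction of X^N - 1
  have hmapF : ((X ^ N - 1 : Polynomial (DualNumber (ZMod (p ^ s)))).map π : Polynomial (ZMod p))
      = X ^ N - 1 := by
    simp
  -- separability of X^N - 1 over ZMod p
  have hNne : ((N : ℕ) : ZMod p) ≠ 0 := by
    have h1 : ((N : ℕ) : ZMod p) = -1 := by
      rw [hNdef, Nat.cast_sub (Nat.one_le_pow _ _ (by omega)), Nat.cast_pow,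
        ZMod.natCast_self, zero_pow hr.ne', Nat.cast_one, zero_sub]
    rw [h1]
    exact neg_ne_zero.mpr one_ne_zero
  have hsep : (X ^ N - 1 : Polynomial (ZMod p)).Separable :=
    Polynomial.X_pow_sub_one_separable_iff.mpr hNne
  obtain ⟨h, hh⟩ := hgd
  have hcopgh : IsCoprime g h := Polynomial.Separable.isCoprime (by rwa [← hh])
  obtain ⟨a, b, hab⟩ := hcopgh
  -- lifts
  obtain ⟨G₀, hG₀map, hG₀deg, hG₀monic⟩ :=
    Polynomial.lifts_and_degree_eq_and_monic ((Polynomial.mem_lifts _).mpr (hmaps g)) hgm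
  obtain ⟨H₀, hH₀⟩ := hmaps h
  obtain ⟨A, hA⟩ := hmaps a
  obtain ⟨B, hB⟩ := hmaps b
  have hcop : ∀ n, ((1 : Polynomial (DualNumber (ZMod (p ^ s)))) -
      (A * G₀ + B * H₀)).coeff n ∈ RingHom.ker π := by
    rw [coeffs_ker_iff]
    rw [Polynomial.map_sub, Polynomial.map_one, Polynomial.map_add, Polynomial.map_mul,
      Polynomial.map_mul, hA, hG₀map, hB, hH₀, hab, sub_self]
  have hstart : ∀ n, ((X ^ N - 1 : Polynomial (DualNumber (ZMod (p ^ s)))) -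
      G₀ * H₀).coeff n ∈ (RingHom.ker π) ^ 1 := by
    rw [pow_one, coeffs_ker_iff]
    rw [Polynomial.map_sub, hmapF, Polynomial.map_mul, hG₀map, hH₀, hh, sub_self]
  obtain ⟨f, H', hfm, hfI, hfF⟩ := hensel_main hcop (s + 2) hkerpow (s + 2) 1 (by omega)
    (by omega) G₀ H₀ hG₀monic
    (fun n => by rw [sub_self]; simp)
    (fun n => by rw [sub_self]; simp)
    hstart
  have hfmap : f.map π = g := by
    have h0 : (f - G₀).map π = 0 := (coeffs_ker_iff _ _).mp hfI
    rw [Polynomial.map_sub, sub_eq_zero] at h0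
    rw [h0, hG₀map]
  have hfdvd : f ∣ (X ^ N - 1 : Polynomial (DualNumber (ZMod (p ^ s)))) := ⟨H', hfF⟩
  -- uniqueness
  have huniq : ∀ y : Polynomial (DualNumber (ZMod (p ^ s))),
      (y.Monic ∧ y.map π = g ∧ y ∣ X ^ N - 1) → y = f := by
    rintro y ⟨hym, hymap, hydvd⟩
    obtain ⟨h₂, hh₂⟩ := hydvd
    have hmap2 : g * (h₂.map π) = X ^ N - 1 := by
      rw [← hymap, ← Polynomial.map_mul, ← hh₂, hmapF]
    have hsep2 : (g * h₂.map π).Separable := by rw [hmap2]; exact hsep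
    obtain ⟨a₂, b₂, hab₂⟩ := hsep2.isCoprime
    obtain ⟨A₂, hA₂⟩ := hmaps a₂
    obtain ⟨B₂, hB₂⟩ := hmaps b₂
    have hδnil : IsNilpotent (A₂ * f + B₂ * h₂ - 1) := by
      rw [Polynomial.isNilpotent_iff]
      intro i
      have hker : ∀ n, (A₂ * f + B₂ * h₂ - 1).coeff n ∈ RingHom.ker π := by
        rw [coeffs_ker_iff]
        rw [Polynomial.map_sub, Polynomial.map_one, Polynomial.map_add, Polynomial.map_mul,
          Polynomial.map_mul, hA₂, hB₂, hfmap, hab₂, sub_self]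
      have hmem := Ideal.pow_mem_pow (hker i) (s + 2)
      rw [hkerpow, Ideal.mem_bot] at hmem
      exact ⟨s + 2, hmem⟩
    have hunit : IsUnit (1 + (A₂ * f + B₂ * h₂ - 1)) := IsNilpotent.isUnit_one_add hδnil
    obtain ⟨v, hv⟩ := hunit
    have hc : (↑v⁻¹ : Polynomial (DualNumber (ZMod (p ^ s)))) *
        (1 + (A₂ * f + B₂ * h₂ - 1)) = 1 := by rw [← hv]; exact v.inv_mul
    have hcoprime : IsCoprime f h₂ :=
      ⟨↑v⁻¹ * A₂, ↑v⁻¹ * B₂, by linear_combination hc⟩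
    have hfy : f ∣ y := hcoprime.dvd_of_dvd_mul_right (hh₂ ▸ hfdvd)
    have hdegf : f.natDegree = g.natDegree := by
      rw [← hfmap]; exact (hfm.natDegree_map π).symm
    have hdegy : y.natDegree = g.natDegree := by
      rw [← hymap]; exact (hym.natDegree_map π).symm
    obtain ⟨c', hc'⟩ := hfy
    have hc'ne : c' ≠ 0 := by
      rintro rfl
      rw [mul_zero] at hc'
      exact hym.ne_zero hc'
    have hdeg' : y.natDegree = f.natDegree + c'.natDegree := by
      rw [hc']; exact hfm.natDegree_mul' hc'ne
    have hc'0 : c'.natDegree = 0 := by omega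
    have hc'C : c' = Polynomial.C (c'.coeff 0) := Polynomial.eq_C_of_natDegree_eq_zero hc'0
    have hcoe1 : c'.coeff 0 = 1 := by
      have h1 : y.coeff f.natDegree = 1 := by
        have h2 := hym.coeff_natDegree
        rwa [hdegy, ← hdegf] at h2
      rw [hc', hc'C, Polynomial.coeff_mul_C, hfm.coeff_natDegree, one_mul] at h1
      exact h1
    rw [hc', hc'C, hcoe1, map_one, mul_one]
  refine ⟨⟨f, ⟨hfm, hfmap, hfdvd⟩, fun y hy => huniq y hy⟩, fun f' hf' => ⟨hf'.1, ?_⟩⟩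
  rw [hf'.2.1]
  exact hgi
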